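/- Let F : Y → ℝ be differentiable with ‖∇F(g)‖ ≤ b for all g, and let G be such that there exist a > 0 and t > b‖K‖ with G((1+ε)u) ≥ G(u) + tε‖u‖ for all ε ≥ 0 and all u with ‖u‖ ≥ a. Then the iterates (uⁿ, qⁿ, gⁿ) of the primal-dual algorithm (with ‖u⁰‖ < a) remain bounded, and hence converge along subsequences. -/

import Mathlib

open Filter Topology

section Aux

open InnerProductSpace

lemma grad_of_min {Y : Type*} [NormedAddCommGroup Y] [InnerProductSpace ℝ Y] [CompleteSpace Y]
    (F : Y → ℝ) (hF : Differentiable ℝ F) (σ : ℝ) (c p m : Y)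
    (hmin : ∀ y : Y, σ / 2 * ‖m - c‖ ^ 2 - (inner ℝ m p : ℝ) + F m ≤
      σ / 2 * ‖y - c‖ ^ 2 - (inner ℝ y p : ℝ) + F y) :
    gradient F m = p + σ • (c - m) := by
  set h : Y → ℝ := fun y => σ / 2 * (inner ℝ (y - c) (y - c) : ℝ) - (inner ℝ p y : ℝ) + F y with hh_def
  have hsub : HasFDerivAt (fun y : Y => y - c) (ContinuousLinearMap.id ℝ Y) m :=
    (hasFDerivAt_id m).sub_const c
  have hsq := hsub.inner ℝ hsub
  have hlin : HasFDerivAt (fun y : Y => (inner ℝ p y : ℝ)) (innerSL ℝ p) m :=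
    (innerSL ℝ p).hasFDerivAt
  have hFm : HasFDerivAt F (toDual ℝ Y (gradient F m)) m := (hF m).hasGradientAt
  have hh : HasFDerivAt h
      ((σ / 2) • ((fderivInnerCLM ℝ (m - c, m - c)).comp
          ((ContinuousLinearMap.id ℝ Y).prod (ContinuousLinearMap.id ℝ Y)))
        - innerSL ℝ p + toDual ℝ Y (gradient F m)) m :=
    ((hsq.const_mul (σ / 2)).sub hlin).add hFm
  have hmin' : ∀ y, h m ≤ h y := by
    intro y
    have h1 := hmin y
    simp only [hh_def, real_inner_self_eq_norm_sq]
    have e1 := real_inner_comm p m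
    have e2 := real_inner_comm p y
    linarith
  have hloc : IsLocalMin h m := Filter.Eventually.of_forall hmin'
  have hL0 := hloc.hasFDerivAt_eq_zero hh
  have key : ∀ w : Y, (inner ℝ (σ • (m - c) - p + gradient F m) w : ℝ) = 0 := by
    intro w
    have := congrFun (congrArg DFunLike.coe hL0) w
    simp only [ContinuousLinearMap.add_apply, ContinuousLinearMap.sub_apply,
      ContinuousLinearMap.smul_apply, ContinuousLinearMap.comp_apply,
      ContinuousLinearMap.prod_apply, ContinuousLinearMap.id_apply,
      fderivInnerCLM_apply, innerSL_apply_apply, toDual_apply_apply,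
      ContinuousLinearMap.zero_apply, smul_eq_mul] at this
    rw [inner_add_left, inner_sub_left, inner_smul_left]
    simp only [RCLike.star_def, starRingEnd_apply, star_trivial]
    rw [real_inner_comm w p] at this ⊢
    have e := real_inner_comm (m - c) w
    linear_combination this - σ / 2 * e
  have hz : σ • (m - c) - p + gradient F m = 0 := by
    have := key (σ • (m - c) - p + gradient F m)
    rwa [inner_self_eq_zero] at this
  have : gradient F m = p - σ • (m - c) := by
    rw [eq_sub_iff_add_eq]
    linear_combination (norm := module) hz
  rw [this, smul_sub, smul_sub]
  module

end Aux

set_option maxHeartbeats 1000000 in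
/-- Boundedness of the PDHG iterates: if `‖∇F‖ ≤ b` and `G` satisfies the growth condition
`G((1+ε)u) ≥ G(u) + tε‖u‖` for `‖u‖ ≥ a` with `t > b‖K‖`, then the iterates
`(uⁿ, qⁿ, gⁿ)` remain bounded and hence converge along subsequences. -/
theorem pdhg_iterates_bounded
    {X Y : Type*} [NormedAddCommGroup X] [InnerProductSpace ℝ X] [FiniteDimensional ℝ X]
    [NormedAddCommGroup Y] [InnerProductSpace ℝ Y] [FiniteDimensional ℝ Y]
    (K : X →L[ℝ] Y) (F : Y → ℝ) (G : X → ℝ) (b a t σ τ θ : ℝ)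
    (hF_diff : Differentiable ℝ F) (hb : ∀ g : Y, ‖gradient F g‖ ≤ b)
    (ha : 0 < a) (ht : t > b * ‖K‖)
    (hG_growth : ∀ u : X, ‖u‖ ≥ a → ∀ ε : ℝ, 0 ≤ ε →
      G ((1 + ε) • u) ≥ G u + t * ε * ‖u‖)
    (hτ : 0 < τ) (hσ : 0 < σ) (hθ0 : 0 ≤ θ) (hθ1 : θ ≤ 1)
    (u : ℕ → X) (g q : ℕ → Y) (ubar : ℕ → X)
    (hu0 : ‖u 0‖ < a) (hubar0 : ubar 0 = u 0)
    (hg : ∀ n, ∀ g' : Y,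
      σ / 2 * ‖g (n + 1) - K (ubar n)‖ ^ 2 - (inner ℝ (g (n + 1)) (q n) : ℝ) + F (g (n + 1)) ≤
        σ / 2 * ‖g' - K (ubar n)‖ ^ 2 - (inner ℝ g' (q n) : ℝ) + F g')
    (hq : ∀ n, q (n + 1) = q n + σ • (K (ubar n) - g (n + 1)))
    (hu : ∀ n, ∀ u' : X,
      1 / (2 * τ) * ‖u (n + 1) - u n‖ ^ 2 + (inner ℝ (K (u (n + 1))) (q (n + 1)) : ℝ)
          + G (u (n + 1)) ≤
        1 / (2 * τ) * ‖u' - u n‖ ^ 2 + (inner ℝ (K u') (q (n + 1)) : ℝ) + G u')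
    (hubar : ∀ n, ubar (n + 1) = u (n + 1) + θ • (u (n + 1) - u n)) :
    (∃ M : ℝ, ∀ n, ‖u n‖ ≤ M ∧ ‖q n‖ ≤ M ∧ ‖g n‖ ≤ M) ∧
    (∃ φ : ℕ → ℕ, StrictMono φ ∧ ∃ (uhat : X) (ghat qhat : Y),
      Filter.Tendsto (u ∘ φ) Filter.atTop (nhds uhat) ∧
      Filter.Tendsto (g ∘ φ) Filter.atTop (nhds ghat) ∧
      Filter.Tendsto (q ∘ φ) Filter.atTop (nhds qhat)) := by
  have hK0 : (0:ℝ) ≤ ‖K‖ := norm_nonneg K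
  have hb0 : (0:ℝ) ≤ b := le_trans (norm_nonneg _) (hb 0)
  -- q (n+1) is the gradient of F at g (n+1), hence bounded by b
  have hqb : ∀ n, ‖q (n + 1)‖ ≤ b := by
    intro n
    have h1 := grad_of_min F hF_diff σ (K (ubar n)) (q n) (g (n + 1)) (hg n)
    have h2 : q (n + 1) = gradient F (g (n + 1)) := by
      rw [hq n, h1]
    rw [h2]; exact hb _
  -- u is bounded by a
  have hub : ∀ n, ‖u n‖ ≤ a := by
    intro n
    induction n with
    | zero => exact hu0.le
    | succ n ih =>
      by_contra hcon
      push_neg at hcon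
      have hw : a < ‖u (n + 1)‖ := hcon
      have hwpos : (0:ℝ) < ‖u (n + 1)‖ := ha.trans hw
      have hc0 : (0:ℝ) < τ * (t - b * ‖K‖) := by nlinarith
      set w := u (n + 1) with hw_def
      set ε := min (τ * (t - b * ‖K‖)) (‖w‖ - a) / ‖w‖ with hε_def
      have hεpos : 0 < ε := div_pos (lt_min hc0 (by linarith)) hwpos
      have h1e : (0:ℝ) < 1 + ε := by linarith
      have hinvpos : (0:ℝ) < (1 + ε)⁻¹ := inv_pos.mpr h1e
      have hinv : (1 + ε)⁻¹ * (1 + ε) = 1 := inv_mul_cancel₀ h1e.ne'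
      set v := (1 + ε)⁻¹ • w with hv_def
      have hvw : (1 + ε) • v = w := by
        rw [hv_def, smul_smul, mul_inv_cancel₀ h1e.ne', one_smul]
      have hvnorm : ‖v‖ = (1 + ε)⁻¹ * ‖w‖ := by
        rw [hv_def, norm_smul, Real.norm_eq_abs, abs_of_pos hinvpos]
      have hεw : ε * ‖w‖ = min (τ * (t - b * ‖K‖)) (‖w‖ - a) := by
        rw [hε_def, div_mul_cancel₀ _ hwpos.ne']
      have hεw1 : ε * ‖w‖ ≤ τ * (t - b * ‖K‖) := hεw.le.trans (min_le_left _ _)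
      have hεw2 : ε * ‖w‖ ≤ ‖w‖ - a := hεw.le.trans (min_le_right _ _)
      have hvW : ‖v‖ ≤ ‖w‖ := by
        rw [hvnorm]
        nlinarith [mul_nonneg hinvpos.le hεpos.le, mul_pos hinvpos hwpos]
      have hva : ‖v‖ ≥ a := by
        rw [ge_iff_le, hvnorm]
        have haw : a * (1 + ε) ≤ ‖w‖ := by nlinarith
        nlinarith [mul_le_mul_of_nonneg_left haw hinvpos.le]
      have hvpos : (0:ℝ) < ‖v‖ := lt_of_lt_of_le ha hva
      clear_value v ε w
      -- growth inequality
      have hgrow := hG_growth v hva ε hεpos.le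
      rw [hvw] at hgrow
      have hineq := hu n v
      rw [← hw_def] at hineq
      -- algebraic identities
      have f0 : v - u n = (w - u n) - ε • v := by
        rw [← hvw]; module
      have f1 : ‖v - u n‖ ^ 2 =
          ‖w - u n‖ ^ 2 - 2 * (ε * (inner ℝ (w - u n) v : ℝ)) + ε ^ 2 * ‖v‖ ^ 2 := by
        rw [f0, norm_sub_sq_real, real_inner_smul_right, norm_smul, Real.norm_eq_abs,
          abs_of_pos hεpos, mul_pow]
      have f2 : (inner ℝ (K v) (q (n + 1)) : ℝ) - (inner ℝ (K w) (q (n + 1)) : ℝ)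
          = -(ε * (inner ℝ (K v) (q (n + 1)) : ℝ)) := by
        have hd : K v - K w = (-ε) • K v := by
          rw [← map_smul, ← map_sub]
          congr 1
          rw [← hvw]; module
        have h5 := inner_sub_left (𝕜 := ℝ) (K v) (K w) (q (n + 1))
        rw [hd, real_inner_smul_left] at h5
        linarith
      have f3 : 0 ≤ (inner ℝ (w - u n) v : ℝ) := by
        have h1 : (inner ℝ (w - u n) v : ℝ) = (1 + ε)⁻¹ * (inner ℝ (w - u n) w : ℝ) := by
          rw [hv_def, real_inner_smul_right]
        have h2 : (inner ℝ (w - u n) w : ℝ) = ‖w‖ ^ 2 - (inner ℝ (u n) w : ℝ) := by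
          rw [inner_sub_left, real_inner_self_eq_norm_sq]
        have h3 : (inner ℝ (u n) w : ℝ) ≤ ‖u n‖ * ‖w‖ := real_inner_le_norm _ _
        have h4 : ‖u n‖ * ‖w‖ ≤ a * ‖w‖ := mul_le_mul_of_nonneg_right ih hwpos.le
        rw [h1, h2]
        have h6 : (0:ℝ) ≤ ‖w‖ ^ 2 - (inner ℝ (u n) w : ℝ) := by nlinarith
        exact mul_nonneg hinvpos.le h6
      have f4 : -(inner ℝ (K v) (q (n + 1)) : ℝ) ≤ b * (‖K‖ * ‖v‖) := by
        have h1 : |(inner ℝ (K v) (q (n + 1)) : ℝ)| ≤ ‖K v‖ * ‖q (n + 1)‖ :=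
          abs_real_inner_le_norm _ _
        have h2 : ‖K v‖ ≤ ‖K‖ * ‖v‖ := K.le_opNorm v
        have h3 := hqb n
        have h4 : ‖K v‖ * ‖q (n + 1)‖ ≤ (‖K‖ * ‖v‖) * b :=
          mul_le_mul h2 h3 (norm_nonneg _) (by positivity)
        have h5 := neg_abs_le (inner ℝ (K v) (q (n + 1)) : ℝ)
        nlinarith
      -- combine
      have key1 : t * ε * ‖v‖ ≤ G w - G v := by linarith
      have key2 : G w - G v ≤ 1 / (2 * τ) * ‖v - u n‖ ^ 2 - 1 / (2 * τ) * ‖w - u n‖ ^ 2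
          + ((inner ℝ (K v) (q (n + 1)) : ℝ) - (inner ℝ (K w) (q (n + 1)) : ℝ)) := by
        linarith
      have key3 : 1 / (2 * τ) * ‖v - u n‖ ^ 2 - 1 / (2 * τ) * ‖w - u n‖ ^ 2
          = 1 / (2 * τ) * ε ^ 2 * ‖v‖ ^ 2 - 1 / τ * (ε * (inner ℝ (w - u n) v : ℝ)) := by
        linear_combination (1 / (2 * τ)) * f1
      have dropI : 0 ≤ 1 / τ * (ε * (inner ℝ (w - u n) v : ℝ)) :=
        mul_nonneg (div_nonneg zero_le_one hτ.le) (mul_nonneg hεpos.le f3)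
      have f4' : ε * -(inner ℝ (K v) (q (n + 1)) : ℝ) ≤ ε * (b * (‖K‖ * ‖v‖)) :=
        mul_le_mul_of_nonneg_left f4 hεpos.le
      have key4 : t * ε * ‖v‖ ≤ 1 / (2 * τ) * ε ^ 2 * ‖v‖ ^ 2 + ε * (b * (‖K‖ * ‖v‖)) := by
        nlinarith [key1, key2, key3, f2, f4', dropI]
      have hεVpos : 0 < ε * ‖v‖ := mul_pos hεpos hvpos
      have key5 : t ≤ 1 / (2 * τ) * (ε * ‖v‖) + b * ‖K‖ := by
        by_contra hcc
        push_neg at hcc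
        have h7 := mul_lt_mul_of_pos_right hcc hεVpos
        nlinarith [key4]
      have hεV2 : ε * ‖v‖ ≤ τ * (t - b * ‖K‖) := by
        have h8 : ε * ‖v‖ ≤ ε * ‖w‖ := mul_le_mul_of_nonneg_left hvW hεpos.le
        linarith
      have h9 : 1 / (2 * τ) * (ε * ‖v‖) ≤ (t - b * ‖K‖) / 2 := by
        have h10 := mul_le_mul_of_nonneg_left hεV2
          (div_nonneg zero_le_one (by linarith : (0:ℝ) ≤ 2 * τ))
        have h11 : 1 / (2 * τ) * (τ * (t - b * ‖K‖)) = (t - b * ‖K‖) / 2 := by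
          field_simp
        linarith
      linarith
  -- bounds on the other sequences
  set Qb := max b ‖q 0‖ with hQb_def
  have hQb0 : (0:ℝ) ≤ Qb := le_trans hb0 (le_max_left _ _)
  have hQ : ∀ n, ‖q n‖ ≤ Qb := by
    intro n
    cases n with
    | zero => exact le_max_right _ _
    | succ n => exact (hqb n).trans (le_max_left _ _)
  have hubarb : ∀ n, ‖ubar n‖ ≤ 3 * a := by
    intro n
    cases n with
    | zero => rw [hubar0]; linarith [hub 0]
    | succ n =>
      rw [hubar n]
      have h1 := hub (n + 1)
      have h2 := hub n
      have h3 : ‖θ • (u (n + 1) - u n)‖ ≤ 2 * a := by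
        rw [norm_smul, Real.norm_eq_abs, abs_of_nonneg hθ0]
        have h4 := norm_sub_le (u (n + 1)) (u n)
        nlinarith [norm_nonneg (u (n + 1) - u n)]
      have h5 := norm_add_le (u (n + 1)) (θ • (u (n + 1) - u n))
      linarith
  set Gb := max ‖g 0‖ (‖K‖ * (3 * a) + 2 * Qb / σ) with hGb_def
  have hG : ∀ n, ‖g n‖ ≤ Gb := by
    intro n
    cases n with
    | zero => exact le_max_left _ _
    | succ n =>
      have h1 : σ⁻¹ • (q (n + 1) - q n) = K (ubar n) - g (n + 1) := by
        rw [hq n, add_sub_cancel_left, smul_smul, inv_mul_cancel₀ hσ.ne', one_smul]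
      have h2 : g (n + 1) = K (ubar n) - σ⁻¹ • (q (n + 1) - q n) := by
        rw [h1]; module
      have h3 : ‖g (n + 1)‖ ≤ ‖K (ubar n)‖ + ‖σ⁻¹ • (q (n + 1) - q n)‖ := by
        rw [h2]; exact norm_sub_le _ _
      have h4 : ‖K (ubar n)‖ ≤ ‖K‖ * (3 * a) := by
        have := K.le_opNorm (ubar n)
        have := hubarb n
        nlinarith [K.le_opNorm (ubar n), hubarb n, norm_nonneg (ubar n)]
      have h5 : ‖σ⁻¹ • (q (n + 1) - q n)‖ ≤ 2 * Qb / σ := by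
        rw [norm_smul, Real.norm_eq_abs, abs_of_pos (inv_pos.mpr hσ)]
        have h9 : ‖q (n + 1) - q n‖ ≤ 2 * Qb := by
          have h6 := norm_sub_le (q (n + 1)) (q n)
          have h7 := hQ (n + 1)
          have h8 := hQ n
          linarith
        calc σ⁻¹ * ‖q (n + 1) - q n‖ ≤ σ⁻¹ * (2 * Qb) :=
              mul_le_mul_of_nonneg_left h9 (inv_pos.mpr hσ).le
          _ = 2 * Qb / σ := (div_eq_inv_mul _ _).symm
      refine le_trans ?_ (le_max_right _ _)
      linarith
  set M := max a (max Qb Gb) with hM_def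
  have hM : ∀ n, ‖u n‖ ≤ M ∧ ‖q n‖ ≤ M ∧ ‖g n‖ ≤ M := by
    intro n
    refine ⟨(hub n).trans (le_max_left _ _),
      (hQ n).trans ((le_max_left _ _).trans (le_max_right _ _)),
      (hG n).trans ((le_max_right _ _).trans (le_max_right _ _))⟩
  refine ⟨⟨M, hM⟩, ?_⟩
  -- subsequence extraction
  have hfmem : ∀ n, (u n, g n, q n) ∈ Metric.closedBall (0 : X × Y × Y) M := by
    intro n
    rw [Metric.mem_closedBall, dist_zero_right]
    have h := hM n
    refine max_le h.1 (max_le h.2.2 h.2.1)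
  obtain ⟨l, -, φ, hφ, hconv⟩ :=
    tendsto_subseq_of_bounded Metric.isBounded_closedBall hfmem
  refine ⟨φ, hφ, l.1, l.2.1, l.2.2, ?_, ?_, ?_⟩
  · exact (continuous_fst.tendsto l).comp hconv
  · exact (continuous_fst.tendsto l.2).comp ((continuous_snd.tendsto l).comp hconv)
  · exact (continuous_snd.tendsto l.2).comp ((continuous_snd.tendsto l).comp hconv)
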